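/- Define the surface P(s,t) = (cos s − sin t · sin s, sin s + cos s · sin t, sinh(t·s)). Then P(s,0) = (cos s, sin s, 0) for all s, and the Lorentzian normal vector along t = 0 satisfies (∂P/∂s)(s,0) × (∂P/∂t)(s,0) = (s·cos s, s·sin s, 0) = −s·N(s), where N(s) = (−cos s, −sin s, 0) is the principal normal of the circle s ↦ (cos s, sin s, 0); in particular, for every s ≠ 0 the surface normal at (s,0) is a nonzero scalar multiple of N(s). -/

import Mathlib

noncomputable section

/-- Lorentzian inner product on Minkowski 3-space `ℝ₁³`. -/
def minkDot (X Y : ℝ × ℝ × ℝ) : ℝ := X.1 * Y.1 + X.2.1 * Y.2.1 - X.2.2 * Y.2.2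

/-- Lorentzian vector product on Minkowski 3-space `ℝ₁³`. -/
def lcross (X Y : ℝ × ℝ × ℝ) : ℝ × ℝ × ℝ :=
  (X.2.1 * Y.2.2 - X.2.2 * Y.2.1, X.2.2 * Y.1 - X.1 * Y.2.2, X.2.1 * Y.1 - X.1 * Y.2.1)

/-- Lorentzian norm `‖X‖ = √|⟨X,X⟩|`. -/
def mnorm (X : ℝ × ℝ × ℝ) : ℝ := Real.sqrt |minkDot X X|

lemma hds (s : ℝ) : HasDerivAt (fun σ : ℝ => ((Real.cos σ - Real.sin 0 * Real.sin σ,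
      Real.sin σ + Real.cos σ * Real.sin 0, Real.sinh (0 * σ)) : ℝ × ℝ × ℝ))
    ((-Real.sin s, Real.cos s, 0) : ℝ × ℝ × ℝ) s := by
  apply HasDerivAt.prodMk
  · simpa [Pi.sub_def, Pi.add_def, Function.comp_def] using ((Real.hasDerivAt_cos s).sub (((Real.hasDerivAt_sin s).const_mul (Real.sin 0))))
  · apply HasDerivAt.prodMk
    · simpa [Pi.sub_def, Pi.add_def, Function.comp_def] using ((Real.hasDerivAt_sin s).add (((Real.hasDerivAt_cos s).mul_const (Real.sin 0))))
    · simp only [zero_mul, Real.sinh_zero]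
      exact hasDerivAt_const s 0

lemma hdt (s : ℝ) : HasDerivAt (fun t : ℝ => ((Real.cos s - Real.sin t * Real.sin s,
      Real.sin s + Real.cos s * Real.sin t, Real.sinh (t * s)) : ℝ × ℝ × ℝ))
    ((-Real.sin s, Real.cos s, s) : ℝ × ℝ × ℝ) 0 := by
  apply HasDerivAt.prodMk
  · simpa [Pi.sub_def, Pi.add_def, Function.comp_def] using ((hasDerivAt_const (0:ℝ) (Real.cos s)).sub
      ((Real.hasDerivAt_sin 0).mul_const (Real.sin s)))
  · apply HasDerivAt.prodMk
    · simpa [Pi.sub_def, Pi.add_def, Function.comp_def] using ((hasDerivAt_const (0:ℝ) (Real.sin s)).add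
        ((Real.hasDerivAt_sin 0).const_mul (Real.cos s)))
    · simpa [Pi.sub_def, Pi.add_def, Function.comp_def] using ((Real.hasDerivAt_sinh ((0:ℝ) * s)).comp 0
        ((hasDerivAt_id (0:ℝ)).mul_const s))

/-- A member of the surface pencil through the circle with its normal along `t = 0`. -/
theorem example_surface_normal_along_circle
    (P : ℝ → ℝ → ℝ × ℝ × ℝ)
    (hP : ∀ s t, P s t = (Real.cos s - Real.sin t * Real.sin s,
      Real.sin s + Real.cos s * Real.sin t, Real.sinh (t * s)))
    (N : ℝ → ℝ × ℝ × ℝ)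
    (hN : ∀ s, N s = (-Real.cos s, -Real.sin s, 0)) :
    ∀ s,
      P s 0 = (Real.cos s, Real.sin s, 0) ∧
      lcross (deriv (fun σ => P σ 0) s) (deriv (fun t => P s t) 0)
        = (s * Real.cos s, s * Real.sin s, 0) ∧
      ((s * Real.cos s, s * Real.sin s, (0 : ℝ)) : ℝ × ℝ × ℝ) = (-s) • N s ∧
      (s ≠ 0 → ∃ c : ℝ, c ≠ 0 ∧
        lcross (deriv (fun σ => P σ 0) s) (deriv (fun t => P s t) 0) = c • N s) := by
  intro s
  have h1 : deriv (fun σ => P σ 0) s = ((-Real.sin s, Real.cos s, 0) : ℝ × ℝ × ℝ) := by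
    have := hds s
    rw [show (fun σ => P σ 0) = (fun σ : ℝ => ((Real.cos σ - Real.sin 0 * Real.sin σ,
        Real.sin σ + Real.cos σ * Real.sin 0, Real.sinh (0 * σ)) : ℝ × ℝ × ℝ)) from
      funext fun σ => hP σ 0]
    exact this.deriv
  have h2 : deriv (fun t => P s t) 0 = ((-Real.sin s, Real.cos s, s) : ℝ × ℝ × ℝ) := by
    have := hdt s
    rw [show (fun t => P s t) = (fun t : ℝ => ((Real.cos s - Real.sin t * Real.sin s,
        Real.sin s + Real.cos s * Real.sin t, Real.sinh (t * s)) : ℝ × ℝ × ℝ)) from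
      funext fun t => hP s t]
    exact this.deriv
  have hc : lcross (deriv (fun σ => P σ 0) s) (deriv (fun t => P s t) 0)
      = ((s * Real.cos s, s * Real.sin s, 0) : ℝ × ℝ × ℝ) := by
    rw [h1, h2]; simp only [lcross, Prod.mk.injEq]; refine ⟨by ring, by ring, by ring⟩
  refine ⟨by simp [hP], hc, ?_, fun hs => ⟨-s, neg_ne_zero.mpr hs, ?_⟩⟩
  · rw [hN]; simp [Prod.ext_iff]
  · rw [hc, hN]; simp [Prod.ext_iff]
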